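/- Give S = K[x,y] the standard grading (a = b = 1, r = x/y) and let M ⊆ S be a monomial ideal of finite colength with T⁻(M) = ∅, so that its minimal generators are m_k = x^{a_k} y^k for 0 ≤ k ≤ e. Then every nonempty path P from m_k whose first arrow is (i_1, ℓ_1) satisfies l(P) ≤ i_1 ≤ k. In particular, every path P from m_k has length l(P) ≤ k, and the monomial m_k r^{l(P)} = x^{a_k + l(P)} y^{k − l(P)} has nonnegative exponents. -/

import Mathlib

/-!
Combinatorial framework for monomial ideals in `K[x,y]`, graded by
`deg x = a`, `deg y = b`.  A monomial `x^α y^β` is represented by the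
pair `(α, β) : ℤ × ℤ`; it lies in `S = K[x,y]` when both entries are
nonnegative.
-/

namespace MonId

/-- A (Laurent) monomial `x^α y^β`, represented by its exponent vector. -/
abbrev Mon : Type := ℤ × ℤ

/-- `p` is a genuine monomial of `S = K[x,y]` (nonnegative exponents). -/
def inS (p : Mon) : Prop := 0 ≤ p.1 ∧ 0 ≤ p.2

/-- `M` is (the set of monomials of) a monomial ideal of `S` of finite
colength: it consists of monomials of `S`, is closed under multiplication
by `x` and by `y`, and its complement in the monomials of `S` is finite. -/
def IsMonIdeal (M : Set Mon) : Prop :=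
  (∀ p ∈ M, inS p) ∧
  (∀ p ∈ M, (p.1 + 1, p.2) ∈ M ∧ (p.1, p.2 + 1) ∈ M) ∧
  {p : Mon | inS p ∧ p ∉ M}.Finite

/-- `p` is a minimal monomial generator of the monomial ideal `M`. -/
def IsMinGen (M : Set Mon) (p : Mon) : Prop :=
  p ∈ M ∧ (p.1 - 1, p.2) ∉ M ∧ (p.1, p.2 - 1) ∉ M

/-- `m 0, m 1, …, m e` is the list of minimal generators of `M`, in
increasing lexicographic order `≺` with `x ≺ y` (equivalently, with
strictly increasing `y`-exponents). -/
def IsGenSeq (M : Set Mon) (e : ℕ) (m : ℕ → Mon) : Prop :=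
  (∀ k ≤ e, IsMinGen M (m k)) ∧
  (∀ k, k < e → (m k).2 < (m (k + 1)).2) ∧
  (∀ p, IsMinGen M p → ∃ k ≤ e, m k = p)

/-- Multiplication of the monomial `p` by `r^ℓ`, where `r = x^b y^{-a}`. -/
def rpow (a b ℓ : ℤ) (p : Mon) : Mon := (p.1 + b * ℓ, p.2 - a * ℓ)

/-- `w m i` is `w_i = lcm(m_{i-1}, m_i)` (componentwise max of exponents). -/
def w (m : ℕ → Mon) (i : ℕ) : Mon :=
  (max (m (i - 1)).1 (m i).1, max (m (i - 1)).2 (m i).2)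

/-- The set `T⁺(M)` of positive significant arrows `(i, ℓ)`:
`1 ≤ i ≤ e`, `ℓ ≥ 1`, `m_i r^ℓ ∈ S ∖ M` and `w_i r^ℓ ∈ M`. -/
def Tplus (a b : ℤ) (M : Set Mon) (e : ℕ) (m : ℕ → Mon) : Set (ℕ × ℤ) :=
  {q | 1 ≤ q.1 ∧ q.1 ≤ e ∧ 1 ≤ q.2 ∧ inS (rpow a b q.2 (m q.1)) ∧
    rpow a b q.2 (m q.1) ∉ M ∧ rpow a b q.2 (w m q.1) ∈ M}

/-- The set `T⁻(M)` of negative significant arrows `(i, ℓ)`: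
`0 ≤ i ≤ e - 1`, `ℓ ≤ -1`, `m_i r^ℓ ∈ S ∖ M` and `w_{i+1} r^ℓ ∈ M`. -/
def Tminus (a b : ℤ) (M : Set Mon) (e : ℕ) (m : ℕ → Mon) : Set (ℕ × ℤ) :=
  {q | q.1 < e ∧ q.2 ≤ -1 ∧ inS (rpow a b q.2 (m q.1)) ∧
    rpow a b q.2 (m q.1) ∉ M ∧ rpow a b q.2 (w m (q.1 + 1)) ∈ M}

/-- `j⁺(p) = max {i : m_i divides p}`. -/
def jplus (e : ℕ) (m : ℕ → Mon) (p : Mon) : ℕ :=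
  Nat.findGreatest (fun i => (m i).1 ≤ p.1 ∧ (m i).2 ≤ p.2) e

/-- `j⁻(p) = min {i : m_i divides p}`. -/
noncomputable def jminus (e : ℕ) (m : ℕ → Mon) (p : Mon) : ℕ :=
  sInf {i | i ≤ e ∧ (m i).1 ≤ p.1 ∧ (m i).2 ≤ p.2}

/-- `IsPath a b M e m i P`: `P` is a path from the generator `m_i`, i.e. a
finite sequence of positive significant arrows whose first arrow `(i₁, ℓ₁)`
has `i₁ ≤ i`, and whose tail is a path from `m_{j⁺(w_{i₁} r^{ℓ₁})}`.
The empty sequence is a path from every generator. -/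
def IsPath (a b : ℤ) (M : Set Mon) (e : ℕ) (m : ℕ → Mon) : ℕ → List (ℕ × ℤ) → Prop
  | _, [] => True
  | i, q :: rest => q ∈ Tplus a b M e m ∧ q.1 ≤ i ∧
      IsPath a b M e m (jplus e m (rpow a b q.2 (w m q.1))) rest

/-- The length `l(P) = ℓ₁ + ⋯ + ℓ_s` of a path. -/
def llen (P : List (ℕ × ℤ)) : ℤ := (P.map Prod.snd).sum

/-- `lm j` is the largest `ℓ` with `(j, ℓ) ∈ T⁺(M)`, and is `0` when no
such arrow exists. -/
def IsLmax (Tp : Set (ℕ × ℤ)) (lm : ℕ → ℤ) : Prop :=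
  ∀ j : ℕ, (∀ ℓ : ℤ, (j, ℓ) ∈ Tp → ℓ ≤ lm j) ∧
    ((∃ ℓ : ℤ, (j, ℓ) ∈ Tp) → (j, lm j) ∈ Tp) ∧
    ((¬ ∃ ℓ : ℤ, (j, ℓ) ∈ Tp) → lm j = 0)

/-- `IsZSeq a b e m lm k L`: `L` is the sequence `(z_1, z_2, …)` of arrows
produced by the greedy procedure started at index `k`: while `i ≥ 1`, if
`ℓ_i > 0` record the arrow `(i, ℓ_i)` and jump to `j⁺(w_i r^{ℓ_i})`,
otherwise decrease `i` by one; stop when `i ≤ 0`. -/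
inductive IsZSeq (a b : ℤ) (e : ℕ) (m : ℕ → Mon) (lm : ℕ → ℤ) : ℕ → List (ℕ × ℤ) → Prop where
  | zero : IsZSeq a b e m lm 0 []
  | skip {i : ℕ} {L : List (ℕ × ℤ)} : 1 ≤ i → lm i ≤ 0 →
      IsZSeq a b e m lm (i - 1) L → IsZSeq a b e m lm i L
  | step {i : ℕ} {L : List (ℕ × ℤ)} : 1 ≤ i → 0 < lm i →
      IsZSeq a b e m lm (jplus e m (rpow a b (lm i) (w m i))) L →
      IsZSeq a b e m lm i ((i, lm i) :: L)

/-- `D` is a direct path from `m_k`: a path which is either a nonempty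
initial segment `(z_1, …, z_s)` of the greedy sequence from `k`, or
`(z_1, …, z_s, (i', ℓ'))` where `i'` is the index of `z_{s+1}` and
`1 ≤ ℓ' < ℓ_{i'}`. -/
def IsDirectPath (a b : ℤ) (M : Set Mon) (e : ℕ) (m : ℕ → Mon) (lm : ℕ → ℤ)
    (k : ℕ) (D : List (ℕ × ℤ)) : Prop :=
  IsPath a b M e m k D ∧
  ∃ L, IsZSeq a b e m lm k L ∧
    ((∃ s : ℕ, 0 < s ∧ s ≤ L.length ∧ D = L.take s) ∨
     (∃ (s : ℕ) (z : ℕ × ℤ) (ℓ' : ℤ), L[s]? = some z ∧ 1 ≤ ℓ' ∧ ℓ' < z.2 ∧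
       D = L.take s ++ [(z.1, ℓ')]))

/-- The monomial `c_P = c_{i₁}^{ℓ₁} ⋯ c_{i_s}^{ℓ_s}` associated to a path,
as an element of the polynomial ring with variables `c_i^ℓ` (indexed by
pairs `(i, ℓ)`). -/
noncomputable def cP (K : Type*) [CommSemiring K] (P : List (ℕ × ℤ)) : MvPolynomial (ℕ × ℤ) K :=
  (P.map MvPolynomial.X).prod

end MonId

open MonId

namespace MonId

variable {M : Set Mon} {e : ℕ} {m : ℕ → Mon}

lemma addx (hM : IsMonIdeal M) (d : ℕ) {p : Mon} (hp : p ∈ M) : (p.1 + d, p.2) ∈ M := by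
  induction d with
  | zero => simpa using hp
  | succ n ih =>
      have h := (hM.2.1 _ ih).1
      have : ((p.1 + (n : ℤ)) + 1, p.2) = (p.1 + ((n : ℕ) + 1 : ℕ), p.2) := by
        push_cast; ring_nf
      rwa [this] at h

lemma addy (hM : IsMonIdeal M) (d : ℕ) {p : Mon} (hp : p ∈ M) : (p.1, p.2 + d) ∈ M := by
  induction d with
  | zero => simpa using hp
  | succ n ih =>
      have h := (hM.2.1 _ ih).2
      have : (p.1, (p.2 + (n : ℤ)) + 1) = (p.1, p.2 + ((n : ℕ) + 1 : ℕ)) := by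
        push_cast; ring_nf
      rwa [this] at h

lemma up (hM : IsMonIdeal M) {p q : Mon} (hq : q ∈ M) (h1 : q.1 ≤ p.1) (h2 : q.2 ≤ p.2) :
    p ∈ M := by
  have h := addy hM (p.2 - q.2).toNat (addx hM (p.1 - q.1).toNat hq)
  have hp : ((q.1 + ((p.1 - q.1).toNat : ℤ), q.2) : Mon).1 = p.1 := by simp; omega
  have hp2 : (q.1 + ((p.1 - q.1).toNat : ℤ), q.2 + ((p.2 - q.2).toNat : ℤ)) = p := by
    have : ((p.2 - q.2).toNat : ℤ) = p.2 - q.2 := by omega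
    have h1' : ((p.1 - q.1).toNat : ℤ) = p.1 - q.1 := by omega
    rw [this, h1']; ext <;> simp
  simp only at h
  rwa [hp2] at h

/-- Every monomial of `M` is divisible by some minimal generator. -/
lemma exists_gen (hM : IsMonIdeal M) (hg : IsGenSeq M e m) :
    ∀ n : ℕ, ∀ p : Mon, p ∈ M → (p.1 + p.2).toNat ≤ n →
      ∃ j ≤ e, (m j).1 ≤ p.1 ∧ (m j).2 ≤ p.2 := by
  intro n
  induction n with
  | zero =>
      intro p hp _
      by_cases hmin : IsMinGen M p
      · obtain ⟨j, hj, hmj⟩ := hg.2.2 p hmin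
        exact ⟨j, hj, by rw [hmj], by rw [hmj]⟩
      · exfalso
        have hps := hM.1 p hp
        rcases Classical.em ((p.1 - 1, p.2) ∈ M) with h | h
        · have := hM.1 _ h; exact absurd this (by simp [inS]; omega)
        · rcases Classical.em ((p.1, p.2 - 1) ∈ M) with h' | h'
          · have := hM.1 _ h'; exact absurd this (by simp [inS]; omega)
          · exact hmin ⟨hp, h, h'⟩
  | succ n ih =>
      intro p hp hle
      by_cases hmin : IsMinGen M p
      · obtain ⟨j, hj, hmj⟩ := hg.2.2 p hmin
        exact ⟨j, hj, by rw [hmj], by rw [hmj]⟩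
      · have hps := hM.1 p hp
        rcases Classical.em ((p.1 - 1, p.2) ∈ M) with h | h
        · have hs := hM.1 _ h
          obtain ⟨j, hj, hj1, hj2⟩ := ih (p.1 - 1, p.2) h (by
            simp only [inS] at hps hs; omega)
          exact ⟨j, hj, by simp at hj1 ⊢; omega, hj2⟩
        · rcases Classical.em ((p.1, p.2 - 1) ∈ M) with h' | h'
          · have hs := hM.1 _ h'
            obtain ⟨j, hj, hj1, hj2⟩ := ih (p.1, p.2 - 1) h' (by
              simp only [inS] at hps hs; omega)
            exact ⟨j, hj, hj1, by simp at hj2 ⊢; omega⟩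
          · exact absurd ⟨hp, h, h'⟩ hmin

lemma y_mono (hg : IsGenSeq M e m) :
    ∀ j ≤ e, ∀ i < j, (m i).2 < (m j).2 := by
  intro j
  induction j with
  | zero => omega
  | succ n ih =>
      intro hje i hij
      rcases Nat.lt_or_ge i n with h | h
      · exact lt_trans (ih (by omega) i h) (hg.2.1 n (by omega))
      · have : i = n := by omega
        subst this
        exact hg.2.1 i (by omega)

lemma x_step (hM : IsMonIdeal M) (hg : IsGenSeq M e m) {i : ℕ} (hi : i < e) :
    (m (i + 1)).1 < (m i).1 := by
  by_contra h
  push_neg at h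
  have hmi := hg.1 i (by omega)
  have hmi1 := hg.1 (i + 1) (by omega)
  have hy : (m i).2 < (m (i + 1)).2 := hg.2.1 i hi
  have : ((m (i + 1)).1, (m (i + 1)).2 - 1) ∈ M :=
    up hM hmi.1 h (by omega)
  exact hmi1.2.2 this

lemma x_mono (hM : IsMonIdeal M) (hg : IsGenSeq M e m) :
    ∀ j ≤ e, ∀ i < j, (m j).1 < (m i).1 := by
  intro j
  induction j with
  | zero => omega
  | succ n ih =>
      intro hje i hij
      rcases Nat.lt_or_ge i n with h | h
      · exact lt_trans (x_step hM hg (by omega)) (ih (by omega) i h)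
      · have : i = n := by omega
        subst this
        exact x_step hM hg (by omega)

lemma y_zero (hM : IsMonIdeal M) (hg : IsGenSeq M e m) : (m 0).2 = 0 := by
  -- there is a pure power of x in M, by finite colength
  have hex : ∃ n : ℕ, ((n : ℤ), 0) ∈ M := by
    by_contra hc
    push_neg at hc
    have hinj : Function.Injective (fun n : ℕ => (((n : ℤ), 0) : Mon)) := by
      intro a b hab
      simpa using congrArg Prod.fst hab
    have hmem : ∀ n : ℕ, (((n : ℤ), 0) : Mon) ∈ {p : Mon | inS p ∧ p ∉ M} := by
      intro n
      exact ⟨⟨by positivity, le_refl 0⟩, hc n⟩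
    exact (Set.infinite_of_injective_forall_mem hinj hmem) hM.2.2
  obtain ⟨n, hn⟩ := hex
  obtain ⟨j, hj, hj1, hj2⟩ := exists_gen hM hg (((n : ℤ) + 0).toNat) _ hn le_rfl
  have hjS := hM.1 _ (hg.1 j hj).1
  have hj20 : (m j).2 = 0 := le_antisymm (by simpa using hj2) hjS.2
  rcases Nat.eq_zero_or_pos j with rfl | hjpos
  · exact hj20
  · have := y_mono hg j hj 0 hjpos
    have h0S := (hM.1 _ (hg.1 0 (by omega)).1).2
    omega

lemma y_eq (hM : IsMonIdeal M) (hg : IsGenSeq M e m) (hTm : Tminus 1 1 M e m = ∅) :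
    ∀ k ≤ e, (m k).2 = (k : ℤ) := by
  intro k
  induction k with
  | zero => intro _; simpa using y_zero hM hg
  | succ n ih =>
      intro hne
      have hn : (m n).2 = (n : ℤ) := ih (by omega)
      have hstep : (m n).2 < (m (n + 1)).2 := hg.2.1 n (by omega)
      by_contra hne2
      have hge : (m (n + 1)).2 ≥ (n : ℤ) + 2 := by omega
      -- construct a negative significant arrow (n, -1)
      have hxs : (m (n + 1)).1 < (m n).1 := x_step hM hg (by omega)
      have hS1 : inS ((m (n + 1)) : Mon) := hM.1 _ (hg.1 (n + 1) hne).1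
      have harrow : ((n, (-1 : ℤ)) : ℕ × ℤ) ∈ Tminus 1 1 M e m := by
        refine ⟨by omega, le_refl _, ?_, ?_, ?_⟩
        · -- inS (rpow 1 1 (-1) (m n))
          have hSn : inS (m n) := hM.1 _ (hg.1 n (by omega)).1
          simp only [rpow, inS] at *
          constructor <;> simp <;> omega
        · -- rpow 1 1 (-1) (m n) ∉ M
          intro hmem
          obtain ⟨j, hj, hj1, hj2⟩ := exists_gen hM hg
            (((m n).1 + 1 * (-1) + ((m n).2 - 1 * (-1))).toNat) _ hmem le_rfl
          simp only [rpow] at hj1 hj2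
          have hjgt : n < j := by
            by_contra hc
            push_neg at hc
            rcases Nat.lt_or_ge j n with h | h
            · have := x_mono hM hg n (by omega) j h; omega
            · have : j = n := by omega
              subst this; omega
          have : (m (n + 1)).2 ≤ (m j).2 := by
            rcases Nat.lt_or_ge (n + 1) j with h | h
            · exact le_of_lt (y_mono hg j hj (n + 1) h)
            · have : j = n + 1 := by omega
              subst this; exact le_refl _
          omega
        · -- rpow 1 1 (-1) (w m (n + 1)) ∈ M
          have hw : w m (n + 1) = ((m n).1, (m (n + 1)).2) := by
            simp only [w, Nat.add_sub_cancel]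
            congr 1
            · omega
            · omega
          rw [hw]
          refine up hM (hg.1 (n + 1) hne).1 ?_ ?_
          · simp only [rpow]; omega
          · simp only [rpow]; omega
      rw [hTm] at harrow
      exact harrow

/-- Key induction: along any path from `m k`, the length stays
nonnegative, bounded by `k`, and bounded by the first index. -/
lemma key (hM : IsMonIdeal M) (hg : IsGenSeq M e m) (hTm : Tminus 1 1 M e m = ∅) :
    ∀ P : List (ℕ × ℤ), ∀ k ≤ e, IsPath 1 1 M e m k P →
      0 ≤ llen P ∧ llen P ≤ (k : ℤ) ∧
        ∀ q rest, P = q :: rest → llen P ≤ (q.1 : ℤ) ∧ q.1 ≤ k := by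
  intro P
  induction P with
  | nil =>
      intro k _ _
      refine ⟨le_refl _, by positivity, ?_⟩
      intro q rest h; exact absurd h (by simp)
  | cons q rest ih =>
      intro k hk hP
      obtain ⟨hq, hqk, hrest⟩ := hP
      obtain ⟨hq1, hqe, hql, _, _, hwM⟩ := hq
      -- the second coordinate of w m q.1 is (m q.1).2
      have hwy : (w m q.1).2 = (m q.1).2 := by
        have : (m (q.1 - 1)).2 < (m q.1).2 := by
          have := y_mono hg q.1 hqe (q.1 - 1) (by omega)
          exact this
        simp only [w]
        omega
      have hyq : (m q.1).2 = (q.1 : ℤ) := y_eq hM hg hTm q.1 hqe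
      -- ℓ ≤ i from w_i r^ℓ ∈ M ⊆ S
      have hwS := hM.1 _ hwM
      have hlli : q.2 ≤ (q.1 : ℤ) := by
        have := hwS.2
        simp only [rpow] at this
        omega
      set j := jplus e m (rpow 1 1 q.2 (w m q.1)) with hj
      have hje : j ≤ e := Nat.findGreatest_le e
      have hjb : (j : ℤ) ≤ (q.1 : ℤ) - q.2 := by
        rcases Nat.eq_zero_or_pos j with h0 | hpos
        · rw [h0]; push_cast; omega
        · have hspec := Nat.findGreatest_of_ne_zero hj.symm (by omega)
          have hy2 := hspec.2
          have hyj : (m j).2 = (j : ℤ) := y_eq hM hg hTm j hje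
          simp only [rpow] at hy2
          omega
      obtain ⟨hr0, hrj, _⟩ := ih j hje hrest
      have hlen : llen (q :: rest) = q.2 + llen rest := by
        simp [llen]
      refine ⟨?_, ?_, ?_⟩
      · rw [hlen]; omega
      · rw [hlen]
        have : (q.1 : ℤ) ≤ (k : ℤ) := by exact_mod_cast hqk
        omega
      · intro q' rest' heq
        obtain ⟨h1, h2⟩ := List.cons.inj heq
        subst h1
        rw [hlen]
        exact ⟨by omega, hqk⟩

end MonId

/-- In the standard grading (`a = b = 1`, `r = x/y`),
let `M` be a monomial ideal of finite colength with `T⁻(M) = ∅` (so its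
minimal generators are `m_k = x^{a_k} y^k`).  Every nonempty path `P`
from `m_k` with first arrow `(i₁, ℓ₁)` has `l(P) ≤ i₁ ≤ k`; in
particular every path `P` from `m_k` has `l(P) ≤ k`, and the monomial
`m_k r^{l(P)}` has nonnegative exponents. -/
theorem path_length_le
    (M : Set Mon) (hM : IsMonIdeal M) (e : ℕ) (m : ℕ → Mon)
    (hg : IsGenSeq M e m) (hTm : Tminus 1 1 M e m = ∅)
    (k : ℕ) (hk : k ≤ e)
    (P : List (ℕ × ℤ)) (hP : IsPath 1 1 M e m k P) :
    (∀ (q : ℕ × ℤ) (rest : List (ℕ × ℤ)), P = q :: rest →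
      llen P ≤ (q.1 : ℤ) ∧ q.1 ≤ k) ∧
    llen P ≤ (k : ℤ) ∧
    inS (rpow 1 1 (llen P) (m k)) := by
  obtain ⟨h0, hle, hhead⟩ := MonId.key hM hg hTm P k hk hP
  refine ⟨fun q rest h => hhead q rest h, hle, ?_⟩
  obtain ⟨hk1, hk2⟩ := hM.1 _ (hg.1 k hk).1
  have hyk : (m k).2 = (k : ℤ) := MonId.y_eq hM hg hTm k hk
  exact ⟨by simp only [rpow]; omega, by simp only [rpow]; omega⟩
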